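/- Let E be a finite set, let each λ^i be the counting measure on E, and let {ρ_i}_{i∈ℤ^d} be functions ρ_i : Ω → [0,∞) which are normalized (λ_i(ρ_i ∣ ω) = 1 for all ω) and very weakly positive, i.e. for each ω, j and finite V ⊆ ℤ^d∖{j} there exists x_j ∈ E with ρ_j(x_j σ_V ω) > 0 for all σ_V ∈ E^V (the set of such x_j being b(j,V,ω)). Suppose that for every i ≠ j, ω ∈ Ω, u_i, u_j ∈ E, x_i ∈ b(i,{j},ω) and x_j ∈ b(j,{i},ω): ρ_i(x_j u_i ω) ρ_j(u_j u_i ω) ρ_i(x_i u_j ω) ρ_j(x_j x_i ω) = ρ_j(x_i u_j ω) ρ_i(u_i u_j ω) ρ_j(x_j u_i ω) ρ_i(x_i x_j ω). Then the family {ρ_i} satisfies hypothesis (H2): for all such ω, x_i, x_j, ρ_i(ω)ρ_j(x_i ω) / (ρ_i(x_i ω) λ_j(ρ_j ρ_i^{-1})(x_i ω)) = ρ_j(ω)ρ_i(x_j ω) / (ρ_j(x_j ω) λ_i(ρ_i ρ_j^{-1})(x_j ω)). -/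

import Mathlib

open MeasureTheory ProbabilityTheory
open scoped ENNReal NNReal

namespace GibbsSingleton

/-- Configuration space `E^ι`. -/
abbrev Config (ι E : Type*) := ι → E

variable {ι E : Type*}

/-- The configuration equal to `σ` on `Λ` and to `ω` off `Λ`. -/
def subst [DecidableEq ι] (Λ : Finset ι) (σ : {x // x ∈ Λ} → E) (ω : Config ι E) :
    Config ι E := fun i => if h : i ∈ Λ then σ ⟨i, h⟩ else ω i

variable [MeasurableSpace E]

/-- The free kernel `λ_Λ` applied to an `ℝ≥0∞`-valued function:
`λ_Λ(h ∣ ω) = ∫ h(σ_Λ ω) λ^Λ(dσ_Λ)`. -/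
noncomputable def freeF [DecidableEq ι] (lam : ι → Measure E) (Λ : Finset ι)
    (h : Config ι E → ℝ≥0∞) (ω : Config ι E) : ℝ≥0∞ :=
  ∫⁻ σ : {x // x ∈ Λ} → E, h (subst Λ σ ω) ∂(Measure.pi fun i : {x // x ∈ Λ} => lam i.1)

/-- The function `ρ_i ρ_j⁻¹`, `ℝ≥0∞`-valued. -/
noncomputable def rat (ρ : ι → Config ι E → ℝ≥0) (i j : ι) (η : Config ι E) : ℝ≥0∞ :=
  (ρ i η : ℝ≥0∞) / (ρ j η : ℝ≥0∞)

/-- The set `b(j,V,ω)` of good configurations at site `j` given `ω` outside `V ∪ {j}`. -/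
noncomputable def bSet [DecidableEq ι] (lam : ι → Measure E) (ρ : ι → Config ι E → ℝ≥0)
    (j : ι) (V : Finset ι) (ω : Config ι E) : Set E :=
  {x | (∀ σ : {y // y ∈ V} → E, 0 < ρ j (subst V σ (Function.update ω j x))) ∧
    ∀ i, i ≠ j →
      0 < (⨅ σ : {y // y ∈ V} → E,
          freeF lam {i} (rat ρ i j) (subst V σ (Function.update ω j x))) ∧
      (⨆ σ : {y // y ∈ V} → E,
          freeF lam {i} (rat ρ i j) (subst V σ (Function.update ω j x))) < ⊤}

/-- The multi-site good set `b(V,W,ω)`. -/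
noncomputable def bSetF [DecidableEq ι] (lam : ι → Measure E) (ρ : ι → Config ι E → ℝ≥0)
    (V W : Finset ι) (ω : Config ι E) : Set ({x // x ∈ V} → E) :=
  {xV | ∀ k : {x // x ∈ V}, xV k ∈ bSet lam ρ k.1 ((V.erase k.1) ∪ W) ω}

/-- The set `B(j,V) = {ω : ω_j ∈ b(j,V,ω)}`. -/
noncomputable def BSet [DecidableEq ι] (lam : ι → Measure E) (ρ : ι → Config ι E → ℝ≥0)
    (j : ι) (V : Finset ι) : Set (Config ι E) :=
  {ω | ω j ∈ bSet lam ρ j V ω}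

/-- Hypothesis (H1): every good set `b(j,V,ω)` is nonempty. -/
def H1 [DecidableEq ι] (lam : ι → Measure E) (ρ : ι → Config ι E → ℝ≥0) : Prop :=
  ∀ (ω : Config ι E) (j : ι) (V : Finset ι), j ∉ V → (bSet lam ρ j V ω).Nonempty

/-- The order-consistency identity appearing in hypothesis (H2), with the convention
`1/∞ = 0` built into `ℝ≥0∞` division. -/
def H2id [DecidableEq ι] (lam : ι → Measure E) (ρ : ι → Config ι E → ℝ≥0)
    (i j : ι) (ω : Config ι E) : Prop :=
  ∀ xi ∈ bSet lam ρ i {j} ω, ∀ xj ∈ bSet lam ρ j {i} ω,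
    ((ρ i ω : ℝ≥0∞) * (ρ j (Function.update ω i xi) : ℝ≥0∞)) /
      ((ρ i (Function.update ω i xi) : ℝ≥0∞) *
        freeF lam {j} (rat ρ j i) (Function.update ω i xi))
    = ((ρ j ω : ℝ≥0∞) * (ρ i (Function.update ω j xj) : ℝ≥0∞)) /
      ((ρ j (Function.update ω j xj) : ℝ≥0∞) *
        freeF lam {i} (rat ρ i j) (Function.update ω j xj))

/-- Hypothesis (H2). -/
def H2 [DecidableEq ι] (lam : ι → Measure E) (ρ : ι → Config ι E → ℝ≥0) : Prop :=
  ∀ i j, i ≠ j → ∀ ω : Config ι E, H2id lam ρ i j ω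

/-- `R_Θ^Γ` evaluated using the choice `x_Θ`:
`((ρ_Θ/ρ_Γ) ⬝ λ_Γ(ρ_Γ ρ_Θ⁻¹))(x_Θ ω)`. -/
noncomputable def Rexpr [DecidableEq ι] (lam : ι → Measure E)
    (ρF : Finset ι → Config ι E → ℝ≥0) (Θ Γ : Finset ι) (x : {y // y ∈ Θ} → E)
    (ω : Config ι E) : ℝ≥0∞ :=
  ((ρF Θ (subst Θ x ω) : ℝ≥0∞) / (ρF Γ (subst Θ x ω) : ℝ≥0∞)) *
    freeF lam Γ (fun η => (ρF Γ η : ℝ≥0∞) / (ρF Θ η : ℝ≥0∞)) (subst Θ x ω)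

/-- The family `ρ_Λ` is obtained from the singletons `ρ_i` by the recursive construction
`ρ_{Λ∪{i}} = ρ_Λ / R_Λ^i`, `R_Λ^i(ω) = ((ρ_Λ/ρ_i) ⬝ λ_i(ρ_i ρ_Λ⁻¹))(x_Λ ω)`,
`x_Λ ∈ b(Λ,{i},ω)` (the value being independent of this choice). -/
def IsRec [DecidableEq ι] (lam : ι → Measure E) (ρ : ι → Config ι E → ℝ≥0)
    (ρF : Finset ι → Config ι E → ℝ≥0) : Prop :=
  (∀ ω, ρF ∅ ω = 1) ∧ (∀ i, ρF {i} = ρ i) ∧ (∀ Λ, Measurable (ρF Λ)) ∧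
  ∀ (Λ : Finset ι) (i : ι), i ∉ Λ → ∀ ω : Config ι E,
    (∀ x ∈ bSetF lam ρ Λ {i} ω, ∀ x' ∈ bSetF lam ρ Λ {i} ω,
      Rexpr lam ρF Λ {i} x ω = Rexpr lam ρF Λ {i} x' ω) ∧
    ∀ x ∈ bSetF lam ρ Λ {i} ω,
      (ρF (insert i Λ) ω : ℝ≥0∞) = (ρF Λ ω : ℝ≥0∞) / Rexpr lam ρF Λ {i} x ω

/-- The sub-σ-algebra `𝓕_U` of events generated by the coordinates in `U`. -/
def cylSigma (E : Type*) [MeasurableSpace E] {ι : Type*} (U : Set ι) :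
    MeasurableSpace (Config ι E) :=
  MeasurableSpace.comap (fun ω (i : U) => ω i.1) MeasurableSpace.pi

/-- A specification: a family of probability kernels, measurable w.r.t. the outside
σ-algebra, proper, and consistent. -/
def IsSpecification (γ : Finset ι → Kernel (Config ι E) (Config ι E)) : Prop :=
  (∀ Λ, IsMarkovKernel (γ Λ)) ∧
  (∀ (Λ : Finset ι) (A : Set (Config ι E)), MeasurableSet A →
    Measurable[cylSigma E ((Λ : Set ι)ᶜ)] fun ω => γ Λ ω A) ∧
  (∀ (Λ : Finset ι) (B : Set (Config ι E)), MeasurableSet[cylSigma E ((Λ : Set ι)ᶜ)] B →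
    ∀ ω, γ Λ ω B = B.indicator (fun _ => (1 : ℝ≥0∞)) ω) ∧
  (∀ Λ Δ : Finset ι, Λ ⊆ Δ → (γ Λ).comp (γ Δ) = γ Δ)

/-- The kernel family `γ` is `{ρ_Λ λ_Λ}`. -/
def MatchesDensity [DecidableEq ι] (lam : ι → Measure E)
    (γ : Finset ι → Kernel (Config ι E) (Config ι E))
    (ρF : Finset ι → Config ι E → ℝ≥0) : Prop :=
  ∀ (Λ : Finset ι) (ω : Config ι E) (A : Set (Config ι E)), MeasurableSet A →
    γ Λ ω A = freeF lam Λ (fun η => (ρF Λ η : ℝ≥0∞) * A.indicator (fun _ => 1) η) ω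

end GibbsSingleton

open GibbsSingleton MeasureTheory ProbabilityTheory

namespace GibbsSingleton

/-- The set of `x` at site `j` making `ρ_j` positive uniformly over `V`
(the good sets of very weak positivity, for finite `E`). -/
def posb {ι E : Type*} [DecidableEq ι] (ρ : ι → Config ι E → ℝ≥0)
    (j : ι) (V : Finset ι) (ω : Config ι E) : Set E :=
  {x | ∀ σ : {y // y ∈ V} → E, 0 < ρ j (subst V σ (Function.update ω j x))}

end GibbsSingleton


namespace GibbsSingleton

section Aux

variable {ι E : Type*} [DecidableEq ι] [MeasurableSpace E] [Fintype E]
  [MeasurableSingletonClass E]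

lemma subst_singleton (j : ι) (σ : {x // x ∈ ({j} : Finset ι)} → E) (ω : Config ι E) :
    subst {j} σ ω = Function.update ω j (σ ⟨j, Finset.mem_singleton_self j⟩) := by
  funext k
  unfold subst
  rcases eq_or_ne k j with rfl | hk
  · simp
  · simp [hk, Function.update_of_ne hk]

lemma lintegral_pi_count {ι' : Type*} [Fintype ι'] [DecidableEq ι']
    (f : (ι' → E) → ℝ≥0∞) :
    ∫⁻ x, f x ∂(Measure.pi fun _ : ι' => (Measure.count : Measure E)) = ∑ x, f x := by
  rw [MeasureTheory.lintegral_fintype]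
  refine Finset.sum_congr rfl fun σ _ => ?_
  have : ({σ} : Set (ι' → E)) = Set.pi Set.univ (fun i => {σ i}) := by
    ext; simp [funext_iff]
  rw [this, Measure.pi_pi]
  simp

lemma freeF_count_singleton (j : ι) (h : Config ι E → ℝ≥0∞) (ω : Config ι E) :
    freeF (fun _ => (Measure.count : Measure E)) {j} h ω
      = ∑ u : E, h (Function.update ω j u) := by
  haveI : Unique {x // x ∈ ({j} : Finset ι)} :=
    ⟨⟨⟨j, Finset.mem_singleton_self j⟩⟩, fun x => Subtype.ext (Finset.mem_singleton.mp x.2)⟩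
  unfold freeF
  rw [lintegral_pi_count]
  rw [← (Equiv.funUnique {x // x ∈ ({j} : Finset ι)} E).symm.sum_comp]
  refine Finset.sum_congr rfl fun u _ => ?_
  congr 1
  rw [subst_singleton]; rfl

lemma key_calc {E : Type*} [Fintype E] (F G : E → E → ℝ≥0) (a b x y : E)
    (hFx : ∀ v, 0 < F x v) (hGy : ∀ u, 0 < G u y)
    (hFsum : ∀ v, ∑ u, F u v = 1) (hGsum : ∀ u, ∑ v, G u v = 1)
    (hdn : ∀ u v, F u y * G u v * F x v * G x y = G x v * F u v * G u y * F x y) :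
    ((F a b : ℝ≥0∞) * (G x b : ℝ≥0∞)) /
        ((F x b : ℝ≥0∞) * ∑ v, (G x v : ℝ≥0∞) / (F x v : ℝ≥0∞))
      = ((G a b : ℝ≥0∞) * (F a y : ℝ≥0∞)) /
        ((G a y : ℝ≥0∞) * ∑ u, (F u y : ℝ≥0∞) / (G u y : ℝ≥0∞)) := by
  set S1 : ℝ≥0 := ∑ v, G x v / F x v with hS1def
  set S2 : ℝ≥0 := ∑ u, F u y / G u y with hS2def
  have hS1 : S1 ≠ 0 := by
    obtain ⟨v0, hv0⟩ : ∃ v0, G x v0 ≠ 0 := by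
      by_contra h
      push_neg at h
      have := hGsum x
      rw [Finset.sum_eq_zero (fun v _ => h v)] at this
      exact one_ne_zero this.symm
    intro h0
    have := (Finset.sum_eq_zero_iff_of_nonneg (fun v _ => zero_le)).mp h0 v0 (Finset.mem_univ _)
    exact (div_ne_zero hv0 (hFx v0).ne') this
  have hS2 : S2 ≠ 0 := by
    obtain ⟨u0, hu0⟩ : ∃ u0, F u0 y ≠ 0 := by
      by_contra h
      push_neg at h
      have := hFsum y
      rw [Finset.sum_eq_zero (fun u _ => h u)] at this
      exact one_ne_zero this.symm
    intro h0
    have := (Finset.sum_eq_zero_iff_of_nonneg (fun u _ => zero_le)).mp h0 u0 (Finset.mem_univ _)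
    exact (div_ne_zero hu0 (hGy u0).ne') this
  have key : G x y * S2 = F x y * S1 := by
    have lhs : G x y * S2 = ∑ u, ∑ v, G u v * (G x y * (F u y / G u y)) := by
      rw [hS2def, Finset.mul_sum]
      refine Finset.sum_congr rfl fun u _ => ?_
      rw [← Finset.sum_mul, hGsum u, one_mul]
    have rhs : F x y * S1 = ∑ v, ∑ u, F u v * (F x y * (G x v / F x v)) := by
      rw [hS1def, Finset.mul_sum]
      refine Finset.sum_congr rfl fun v _ => ?_
      rw [← Finset.sum_mul, hFsum v, one_mul]
    rw [lhs, rhs, Finset.sum_comm]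
    refine Finset.sum_congr rfl fun v _ => Finset.sum_congr rfl fun u _ => ?_
    have h := hdn u v
    apply mul_right_cancel₀ (mul_ne_zero (hGy u).ne' (hFx v).ne')
    calc G u v * (G x y * (F u y / G u y)) * (G u y * F x v)
        = (F u y / G u y * G u y) * (G u v * G x y * F x v) := by ring
      _ = F u y * (G u v * G x y * F x v) := by rw [div_mul_cancel₀ _ (hGy u).ne']
      _ = F u y * G u v * F x v * G x y := by ring
      _ = G x v * F u v * G u y * F x y := h
      _ = (G x v / F x v * F x v) * (F u v * F x y * G u y) := by
            rw [div_mul_cancel₀ _ (hFx v).ne']; ring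
      _ = F u v * (F x y * (G x v / F x v)) * (G u y * F x v) := by ring
  have c1 : (∑ v, (G x v : ℝ≥0∞) / (F x v : ℝ≥0∞)) = (S1 : ℝ≥0∞) := by
    rw [hS1def, ENNReal.coe_finset_sum]
    exact Finset.sum_congr rfl fun v _ => (ENNReal.coe_div (hFx v).ne').symm
  have c2 : (∑ u, (F u y : ℝ≥0∞) / (G u y : ℝ≥0∞)) = (S2 : ℝ≥0∞) := by
    rw [hS2def, ENNReal.coe_finset_sum]
    exact Finset.sum_congr rfl fun u _ => (ENNReal.coe_div (hGy u).ne').symm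
  have hden1 : F x b * S1 ≠ 0 := mul_ne_zero (hFx b).ne' hS1
  have hden2 : G a y * S2 ≠ 0 := mul_ne_zero (hGy a).ne' hS2
  rw [c1, c2, ← ENNReal.coe_mul, ← ENNReal.coe_mul, ← ENNReal.coe_mul, ← ENNReal.coe_mul,
      ← ENNReal.coe_div hden1, ← ENNReal.coe_div hden2, ENNReal.coe_inj,
      div_eq_div_iff hden1 hden2]
  apply mul_right_cancel₀ (hGy x).ne'
  have eqA := hdn a b
  calc F a b * G x b * (G a y * S2) * G x y
      = (F a b * G x b * G a y) * (G x y * S2) := by ring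
    _ = (F a b * G x b * G a y) * (F x y * S1) := by rw [key]
    _ = (G x b * F a b * G a y * F x y) * S1 := by ring
    _ = (F a y * G a b * F x b * G x y) * S1 := by rw [← eqA]
    _ = G a b * F a y * (F x b * S1) * G x y := by ring

end Aux

end GibbsSingleton

/-- **Dachian–Nahapetian compatibility implies (H2).**  For finite `E` with counting
measures, normalized very weakly positive singleton weights satisfying the
Dachian–Nahapetian pointwise identity satisfy hypothesis (H2). -/
theorem DN_condition_implies_H2
    {d : ℕ} (hd : 0 < d) {E : Type*} [Fintype E] [MeasurableSpace E]
    [MeasurableSingletonClass E]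
    (ρ : (Fin d → ℤ) → Config (Fin d → ℤ) E → ℝ≥0)
    (hnorm : ∀ (i : Fin d → ℤ) (ω : Config (Fin d → ℤ) E),
      freeF (fun _ => (Measure.count : Measure E)) {i} (fun η => (ρ i η : ℝ≥0∞)) ω = 1)
    (hvwp : ∀ (ω : Config (Fin d → ℤ) E) (j : Fin d → ℤ) (V : Finset (Fin d → ℤ)),
      j ∉ V → (posb ρ j V ω).Nonempty)
    (hDN : ∀ (i j : Fin d → ℤ), i ≠ j → ∀ (ω : Config (Fin d → ℤ) E) (ui uj : E),
      ∀ xi ∈ posb ρ i {j} ω, ∀ xj ∈ posb ρ j {i} ω,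
        ρ i (Function.update (Function.update ω i ui) j xj) *
          ρ j (Function.update (Function.update ω i ui) j uj) *
          ρ i (Function.update (Function.update ω j uj) i xi) *
          ρ j (Function.update (Function.update ω i xi) j xj)
        = ρ j (Function.update (Function.update ω j uj) i xi) *
            ρ i (Function.update (Function.update ω j uj) i ui) *
            ρ j (Function.update (Function.update ω i ui) j xj) *
            ρ i (Function.update (Function.update ω j xj) i xi)) :
    ∀ (i j : Fin d → ℤ), i ≠ j → ∀ ω : Config (Fin d → ℤ) E,
      ∀ xi ∈ posb ρ i {j} ω, ∀ xj ∈ posb ρ j {i} ω,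
        ((ρ i ω : ℝ≥0∞) * (ρ j (Function.update ω i xi) : ℝ≥0∞)) /
            ((ρ i (Function.update ω i xi) : ℝ≥0∞) *
              freeF (fun _ => (Measure.count : Measure E)) {j} (rat ρ j i)
                (Function.update ω i xi))
          = ((ρ j ω : ℝ≥0∞) * (ρ i (Function.update ω j xj) : ℝ≥0∞)) /
              ((ρ j (Function.update ω j xj) : ℝ≥0∞) *
                freeF (fun _ => (Measure.count : Measure E)) {i} (rat ρ i j)
                  (Function.update ω j xj)) := by
  intro i j hij ω xi hxi xj hxj
  classical
  have hFx : ∀ v, 0 < ρ i (Function.update (Function.update ω j v) i xi) := by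
    intro v
    have h := hxi (fun _ => v)
    rw [subst_singleton] at h
    rwa [Function.update_comm hij] at h
  have hGy : ∀ u, 0 < ρ j (Function.update (Function.update ω j xj) i u) := by
    intro u
    have h := hxj (fun _ => u)
    rwa [subst_singleton] at h
  have hFsum : ∀ v, ∑ u : E, ρ i (Function.update (Function.update ω j v) i u) = 1 := by
    intro v
    have h := hnorm i (Function.update ω j v)
    rw [freeF_count_singleton, ← ENNReal.coe_finset_sum] at h
    exact_mod_cast h
  have hGsum : ∀ u, ∑ v : E, ρ j (Function.update (Function.update ω j v) i u) = 1 := by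
    intro u
    have h := hnorm j (Function.update ω i u)
    rw [freeF_count_singleton] at h
    simp only [Function.update_comm hij] at h
    rw [← ENNReal.coe_finset_sum] at h
    exact_mod_cast h
  have hdn : ∀ u v,
      ρ i (Function.update (Function.update ω j xj) i u) *
          ρ j (Function.update (Function.update ω j v) i u) *
          ρ i (Function.update (Function.update ω j v) i xi) *
          ρ j (Function.update (Function.update ω j xj) i xi)
        = ρ j (Function.update (Function.update ω j v) i xi) *
            ρ i (Function.update (Function.update ω j v) i u) *
            ρ j (Function.update (Function.update ω j xj) i u) *
            ρ i (Function.update (Function.update ω j xj) i xi) := by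
    intro u v
    have h := hDN i j hij ω u v xi hxi xj hxj
    simpa only [Function.update_comm hij] using h
  have main := key_calc (fun u v => ρ i (Function.update (Function.update ω j v) i u))
    (fun u v => ρ j (Function.update (Function.update ω j v) i u)) (ω i) (ω j) xi xj
    hFx hGy hFsum hGsum hdn
  beta_reduce at main
  have e0 : Function.update ω j (ω j) = ω := Function.update_eq_self j ω
  rw [e0] at main
  have e1 : Function.update ω i (ω i) = ω := Function.update_eq_self i ω
  rw [e1] at main
  have e3 : Function.update (Function.update ω j xj) i (ω i) = Function.update ω j xj := by
    have h4 : ω i = (Function.update ω j xj) i := (Function.update_of_ne hij xj ω).symm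
    rw [h4, Function.update_eq_self]
  rw [e3] at main
  rw [freeF_count_singleton, freeF_count_singleton]
  simp only [rat, Function.update_comm hij]
  exact main
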